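/- In minibatch MISO with proper uniform sampling (p_i = τ/n), define M = max_i E[|S| | i ∈ S]. Then for any β > 0, E_k[(1/n) Σ_{i=1}^n ‖x^{k+1} − φ_i^{k+1}‖²] ≤ (6M/τ + 1) E_k[‖x^{k+1} − x^k‖²] + (γτ/(nβ)) ‖f'(x^k)‖² + (1 − τ/n + τ²/(6n²) + γτβ/n) (1/n) Σ_{i=1}^n ‖x^k − φ_i^k‖². -/

import Mathlib

open Finset

noncomputable section

open InnerProductSpace in
open scoped RealInnerProductSpace in
private lemma young13 {d : ℕ} (c : ℝ) (hc : 0 < c) (u w : EuclideanSpace ℝ (Fin d)) :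
    2 * ⟪u, w⟫_ℝ ≤ c⁻¹ * ‖u‖^2 + c * ‖w‖^2 := by
  have h1 := real_inner_le_norm u w
  have h2 : (0:ℝ) ≤ ‖u‖ := norm_nonneg u
  have h3 : (0:ℝ) ≤ ‖w‖ := norm_nonneg w
  have h4 := mul_inv_cancel₀ hc.ne'
  nlinarith [sq_nonneg (‖u‖ - c * ‖w‖), inv_pos.mpr hc, sq_nonneg (c⁻¹ * ‖u‖ - ‖w‖)]

private lemma swapR13 {n : ℕ} (q : Finset (Fin n) → ℝ) (u : Fin n → ℝ) :
    ∑ S : Finset (Fin n), q S * ∑ i ∈ S, u i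
      = ∑ i, (∑ S ∈ Finset.univ.filter (fun S : Finset (Fin n) => i ∈ S), q S) * u i := by
  calc ∑ S : Finset (Fin n), q S * ∑ i ∈ S, u i
      = ∑ S : Finset (Fin n), ∑ i, (if i ∈ S then q S * u i else 0) := by
        refine sum_congr rfl fun S _ => ?_
        rw [Finset.sum_ite_mem, Finset.univ_inter, Finset.mul_sum]
    _ = ∑ i, ∑ S : Finset (Fin n), (if i ∈ S then q S * u i else 0) := Finset.sum_comm
    _ = _ := by
        refine sum_congr rfl fun i _ => ?_
        simp [Finset.sum_filter, Finset.sum_mul, ite_mul]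

private lemma swapV13 {n d : ℕ} (q : Finset (Fin n) → ℝ)
    (u : Fin n → EuclideanSpace ℝ (Fin d)) :
    ∑ S : Finset (Fin n), q S • ∑ i ∈ S, u i
      = ∑ i, (∑ S ∈ Finset.univ.filter (fun S : Finset (Fin n) => i ∈ S), q S) • u i := by
  calc ∑ S : Finset (Fin n), q S • ∑ i ∈ S, u i
      = ∑ S : Finset (Fin n), ∑ i, (if i ∈ S then q S • u i else 0) := by
        refine sum_congr rfl fun S _ => ?_
        rw [Finset.sum_ite_mem, Finset.univ_inter, Finset.smul_sum]
    _ = ∑ i, ∑ S : Finset (Fin n), (if i ∈ S then q S • u i else 0) := Finset.sum_comm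
    _ = _ := by
        refine sum_congr rfl fun i _ => ?_
        simp [Finset.sum_filter, Finset.sum_smul, ite_smul]

open InnerProductSpace in
open scoped RealInnerProductSpace in
private lemma perS13 {n d : ℕ} (hn : 0 < n) (x y : EuclideanSpace ℝ (Fin d))
    (φ : Fin n → EuclideanSpace ℝ (Fin d))
    (ψ : Fin n → EuclideanSpace ℝ (Fin d)) (S : Finset (Fin n))
    (hψ : ∀ i, ψ i = if i ∈ S then x else φ i) :
    (n:ℝ)⁻¹ * ∑ i, ‖y - ψ i‖^2
      = ‖y - x‖^2 + (2/n) * ⟪y - x, ∑ i, (x - φ i)⟫_ℝ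
        - (2/n) * ⟪y - x, ∑ i ∈ S, (x - φ i)⟫_ℝ
        + (1/n) * (∑ i, ‖x - φ i‖^2 - ∑ i ∈ S, ‖x - φ i‖^2) := by
  have hn' : (0:ℝ) < n := by exact_mod_cast hn
  have hi : ∀ i : Fin n, ‖y - ψ i‖^2
      = ‖y - x‖^2 + 2*⟪y - x, x - φ i⟫_ℝ + ‖x - φ i‖^2
        - (if i ∈ S then 2*⟪y - x, x - φ i⟫_ℝ + ‖x - φ i‖^2 else 0) := by
    intro i
    rw [hψ i]
    by_cases h : i ∈ S
    · simp only [h, if_true]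
      ring
    · simp only [h, if_false]
      have : y - x + (x - φ i) = y - φ i := by abel
      rw [← this, norm_add_sq_real]
      ring
  rw [Finset.sum_congr rfl fun i _ => hi i]
  rw [Finset.sum_sub_distrib, Finset.sum_add_distrib, Finset.sum_add_distrib,
    Finset.sum_const, Finset.card_univ, Fintype.card_fin, nsmul_eq_mul,
    Finset.sum_ite_mem, Finset.univ_inter, Finset.sum_add_distrib,
    ← Finset.mul_sum, ← Finset.mul_sum, ← inner_sum, ← inner_sum]
  field_simp
  ring

open InnerProductSpace in
open scoped RealInnerProductSpace in
set_option maxHeartbeats 1000000 in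
theorem stmt13 {d n : ℕ} (hn : 0 < n)
    (f : Fin n → EuclideanSpace ℝ (Fin d) → ℝ)
    (g : Fin n → EuclideanSpace ℝ (Fin d) → EuclideanSpace ℝ (Fin d))
    (hg : ∀ i y, HasGradientAt (f i) (g i y) y)
    (G : EuclideanSpace ℝ (Fin d) → EuclideanSpace ℝ (Fin d))
    (hG : ∀ y, HasGradientAt (fun z => (n : ℝ)⁻¹ * ∑ i, f i z) (G y) y)
    (P : Finset (Fin n) → ℝ) (hP : ∀ S, 0 ≤ P S)
    (hPsum : ∑ S : Finset (Fin n), P S = 1)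
    (τ γ β : ℝ) (hτ : 0 < τ) (hγ : 0 < γ) (hβ : 0 < β)
    (hp : ∀ i, ∑ S ∈ Finset.univ.filter (fun S : Finset (Fin n) => i ∈ S), P S = τ / n)
    (M : ℝ)
    (hM : M = Finset.univ.sup' ⟨⟨0, hn⟩, Finset.mem_univ _⟩ fun i =>
      (∑ S ∈ Finset.univ.filter (fun S : Finset (Fin n) => i ∈ S),
        P S * (S.card : ℝ)) / (τ / n))
    (x : EuclideanSpace ℝ (Fin d)) (φ : Fin n → EuclideanSpace ℝ (Fin d))
    (hx : x = (n : ℝ)⁻¹ • ∑ i, φ i - (γ / n) • ∑ i, g i (φ i))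
    (φnext : Finset (Fin n) → Fin n → EuclideanSpace ℝ (Fin d))
    (hφnext : ∀ S i, φnext S i = if i ∈ S then x else φ i)
    (xnext : Finset (Fin n) → EuclideanSpace ℝ (Fin d))
    (hxnext : ∀ S, xnext S =
      (n : ℝ)⁻¹ • ∑ i, φnext S i - (γ / n) • ∑ i, g i (φnext S i)) :
    ∑ S : Finset (Fin n), P S * ((n : ℝ)⁻¹ * ∑ i, ‖xnext S - φnext S i‖ ^ 2) ≤
      (6 * M / τ + 1) * ∑ S : Finset (Fin n), P S * ‖xnext S - x‖ ^ 2 +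
      γ * τ / (n * β) * ‖G x‖ ^ 2 +
      (1 - τ / n + τ ^ 2 / (6 * (n : ℝ) ^ 2) + γ * τ * β / n) *
        ((n : ℝ)⁻¹ * ∑ i, ‖x - φ i‖ ^ 2) := by
  have hn' : (0:ℝ) < n := by exact_mod_cast hn
  have hτn : (0:ℝ) < τ / n := div_pos hτ hn'
  set A : ℝ := ∑ S : Finset (Fin n), P S * ‖xnext S - x‖ ^ 2 with hA
  set Bsum : ℝ := ∑ i, ‖x - φ i‖ ^ 2 with hBsum
  -- the gradient identity
  have hGx : G x = (n : ℝ)⁻¹ • ∑ i, g i x := by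
    have hsumF : HasFDerivAt (fun z => ∑ i, f i z)
        (∑ i, toDual ℝ (EuclideanSpace ℝ (Fin d)) (g i x)) x :=
      HasFDerivAt.fun_sum (fun i _ => (hg i x).hasFDerivAt)
    have hmulF : HasFDerivAt (fun z => (n:ℝ)⁻¹ * ∑ i, f i z)
        ((n:ℝ)⁻¹ • ∑ i, toDual ℝ (EuclideanSpace ℝ (Fin d)) (g i x)) x :=
      hsumF.const_mul _
    have h1 : toDual ℝ (EuclideanSpace ℝ (Fin d)) (G x)
        = (n:ℝ)⁻¹ • ∑ i, toDual ℝ (EuclideanSpace ℝ (Fin d)) (g i x) :=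
      (hG x).hasFDerivAt.unique hmulF
    have h2 : ((n:ℝ)⁻¹ • ∑ i, toDual ℝ (EuclideanSpace ℝ (Fin d)) (g i x))
        = toDual ℝ (EuclideanSpace ℝ (Fin d)) ((n:ℝ)⁻¹ • ∑ i, g i x) := by
      rw [map_smul, map_sum]
    exact (toDual ℝ (EuclideanSpace ℝ (Fin d))).injective (by rw [h1, h2])
  -- the update increment as a sum over S
  set v : Fin n → EuclideanSpace ℝ (Fin d) :=
    fun i => (n:ℝ)⁻¹ • (x - φ i) - (γ/n) • (g i x - g i (φ i)) with hv
  have ha : ∀ S : Finset (Fin n), xnext S - x = ∑ i ∈ S, v i := by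
    intro S
    have h1 : ∀ i, φnext S i - φ i = if i ∈ S then x - φ i else 0 := by
      intro i; rw [hφnext]; by_cases h : i ∈ S <;> simp [h]
    have h2 : ∀ i, g i (φnext S i) - g i (φ i) = if i ∈ S then g i x - g i (φ i) else 0 := by
      intro i; rw [hφnext]; by_cases h : i ∈ S <;> simp [h]
    calc xnext S - x
        = (n:ℝ)⁻¹ • ∑ i, (φnext S i - φ i)
            - (γ/n) • ∑ i, (g i (φnext S i) - g i (φ i)) := by
          conv_lhs => rw [hxnext S, hx]
          rw [Finset.sum_sub_distrib, Finset.sum_sub_distrib, smul_sub, smul_sub]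
          abel
      _ = (n:ℝ)⁻¹ • (∑ i ∈ S, (x - φ i)) - (γ/n) • (∑ i ∈ S, (g i x - g i (φ i))) := by
          rw [Finset.sum_congr rfl fun i _ => h1 i, Finset.sum_congr rfl fun i _ => h2 i,
            Finset.sum_ite_mem, Finset.univ_inter, Finset.sum_ite_mem, Finset.univ_inter]
      _ = ∑ i ∈ S, v i := by
          rw [Finset.smul_sum, Finset.smul_sum, ← Finset.sum_sub_distrib]
  -- expectation of the increment
  have hx2 : x - (n:ℝ)⁻¹ • ∑ i, φ i = -((γ/n) • ∑ i, g i (φ i)) := by rw [hx]; abel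
  have hvsum : ∑ i, v i = -((γ/n) • ∑ i, g i x) := by
    calc ∑ i, v i
        = (n:ℝ)⁻¹ • ∑ i, (x - φ i) - (γ/n) • ∑ i, (g i x - g i (φ i)) := by
          rw [Finset.sum_sub_distrib, Finset.smul_sum, Finset.smul_sum]
      _ = (x - (n:ℝ)⁻¹ • ∑ i, φ i) - (γ/n) • ∑ i, g i x + (γ/n) • ∑ i, g i (φ i) := by
          rw [Finset.sum_sub_distrib, Finset.sum_sub_distrib, Finset.sum_const,
            Finset.card_univ, Fintype.card_fin, smul_sub, smul_sub,
            ← Nat.cast_smul_eq_nsmul ℝ, smul_smul, inv_mul_cancel₀ hn'.ne', one_smul]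
          abel
      _ = -((γ/n) • ∑ i, g i x) := by rw [hx2]; abel
  have hEa : ∑ S : Finset (Fin n), P S • (xnext S - x) = (-(γ*τ/n)) • G x := by
    calc ∑ S : Finset (Fin n), P S • (xnext S - x)
        = ∑ S : Finset (Fin n), P S • ∑ i ∈ S, v i :=
          sum_congr rfl fun S _ => by rw [ha S]
      _ = ∑ i, (τ/n) • v i := by
          rw [swapV13]
          exact sum_congr rfl fun i _ => by rw [hp i]
      _ = (τ/n) • ∑ i, v i := (Finset.smul_sum).symm
      _ = (-(γ*τ/n)) • G x := by
          rw [hvsum, hGx, smul_neg, smul_smul, smul_smul, ← neg_smul]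
          congr 1
          field_simp
  -- bounds related to M
  have hM1 : (1:ℝ) ≤ M := by
    set i0 : Fin n := ⟨0, hn⟩
    have h1 : τ/n ≤ ∑ S ∈ Finset.univ.filter (fun S : Finset (Fin n) => i0 ∈ S),
        P S * (S.card : ℝ) := by
      rw [← hp i0]
      refine Finset.sum_le_sum fun S hS => ?_
      have hiS : i0 ∈ S := (Finset.mem_filter.mp hS).2
      have hc : (1:ℝ) ≤ (S.card : ℝ) := by
        exact_mod_cast Finset.one_le_card.mpr ⟨i0, hiS⟩
      calc P S = P S * 1 := by ring
        _ ≤ P S * (S.card : ℝ) := mul_le_mul_of_nonneg_left hc (hP S)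
    have h2 : (1:ℝ) ≤ (∑ S ∈ Finset.univ.filter (fun S : Finset (Fin n) => i0 ∈ S),
        P S * (S.card : ℝ)) / (τ / n) := (one_le_div hτn).mpr h1
    rw [hM]
    exact le_trans h2 (Finset.le_sup' (fun i => (∑ S ∈ Finset.univ.filter
      (fun S : Finset (Fin n) => i ∈ S), P S * (S.card : ℝ)) / (τ / n))
      (Finset.mem_univ i0))
  have hMpos : (0:ℝ) < M := lt_of_lt_of_le one_pos hM1
  have hMil : ∀ i : Fin n, ∑ S ∈ Finset.univ.filter (fun S : Finset (Fin n) => i ∈ S),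
      P S * (S.card : ℝ) ≤ M * (τ / n) := by
    intro i
    have h1 : (∑ S ∈ Finset.univ.filter (fun S : Finset (Fin n) => i ∈ S),
        P S * (S.card : ℝ)) / (τ / n) ≤ M := by
      rw [hM]
      exact Finset.le_sup' (fun i => (∑ S ∈ Finset.univ.filter
        (fun S : Finset (Fin n) => i ∈ S), P S * (S.card : ℝ)) / (τ / n))
        (Finset.mem_univ i)
    exact (div_le_iff₀ hτn).mp h1
  -- main decomposition
  set I1 : ℝ := ∑ S : Finset (Fin n), P S * ⟪xnext S - x, ∑ i, (x - φ i)⟫_ℝ with hI1d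
  set I2 : ℝ := ∑ S : Finset (Fin n), P S * ⟪xnext S - x, ∑ i ∈ S, (x - φ i)⟫_ℝ with hI2d
  set I3 : ℝ := ∑ S : Finset (Fin n), P S * (Bsum - ∑ i ∈ S, ‖x - φ i‖^2) with hI3d
  have hId : ∑ S : Finset (Fin n), P S * ((n : ℝ)⁻¹ * ∑ i, ‖xnext S - φnext S i‖ ^ 2)
      = A + (2/n) * I1 - (2/n) * I2 + (1/n) * I3 := by
    calc ∑ S : Finset (Fin n), P S * ((n : ℝ)⁻¹ * ∑ i, ‖xnext S - φnext S i‖ ^ 2)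
        = ∑ S : Finset (Fin n), (P S * ‖xnext S - x‖^2
            + (2/n) * (P S * ⟪xnext S - x, ∑ i, (x - φ i)⟫_ℝ)
            - (2/n) * (P S * ⟪xnext S - x, ∑ i ∈ S, (x - φ i)⟫_ℝ)
            + (1/n) * (P S * (Bsum - ∑ i ∈ S, ‖x - φ i‖^2))) := by
          refine sum_congr rfl fun S _ => ?_
          rw [perS13 hn x (xnext S) φ (φnext S) S (hφnext S)]
          rw [hBsum]
          ring
      _ = A + (2/n) * I1 - (2/n) * I2 + (1/n) * I3 := by
          rw [Finset.sum_add_distrib, Finset.sum_sub_distrib, Finset.sum_add_distrib,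
            ← Finset.mul_sum, ← Finset.mul_sum, ← Finset.mul_sum]
  -- bound I1
  have hbI1 : (2/n) * I1 ≤ γ * τ / (n * β) * ‖G x‖ ^ 2
      + γ * τ * β / n * ((n:ℝ)⁻¹ * Bsum) := by
    set c : ℝ := γ * τ * β / n with hc
    have hcpos : 0 < c := by positivity
    set Ea : EuclideanSpace ℝ (Fin d) := ∑ S : Finset (Fin n), P S • (xnext S - x) with hEad
    have e1 : I1 = ∑ i, ⟪Ea, x - φ i⟫_ℝ := by
      rw [hI1d]
      calc ∑ S : Finset (Fin n), P S * ⟪xnext S - x, ∑ i, (x - φ i)⟫_ℝ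
          = ⟪Ea, ∑ i, (x - φ i)⟫_ℝ := by
            rw [hEad, sum_inner]
            exact sum_congr rfl fun S _ => (real_inner_smul_left _ _ _).symm
        _ = ∑ i, ⟪Ea, x - φ i⟫_ℝ := inner_sum _ _ _
    have hEanorm : ‖Ea‖^2 = (γ * τ / n)^2 * ‖G x‖^2 := by
      rw [hEa, norm_smul, mul_pow, Real.norm_eq_abs, sq_abs, neg_sq]
    have hpt : ∀ i : Fin n, 2 * ⟪Ea, x - φ i⟫_ℝ
        ≤ c⁻¹ * ((γ * τ / n)^2 * ‖G x‖^2) + c * ‖x - φ i‖^2 := by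
      intro i
      have := young13 c hcpos Ea (x - φ i)
      rw [hEanorm] at this
      exact this
    have hsum2 : 2 * I1 ≤ (n:ℝ) * (c⁻¹ * ((γ * τ / n)^2 * ‖G x‖^2)) + c * Bsum := by
      calc 2 * I1 = ∑ i, 2 * ⟪Ea, x - φ i⟫_ℝ := by rw [e1, Finset.mul_sum]
        _ ≤ ∑ i : Fin n, (c⁻¹ * ((γ * τ / n)^2 * ‖G x‖^2) + c * ‖x - φ i‖^2) :=
            Finset.sum_le_sum fun i _ => hpt i
        _ = (n:ℝ) * (c⁻¹ * ((γ * τ / n)^2 * ‖G x‖^2)) + c * Bsum := by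
            rw [Finset.sum_add_distrib, Finset.sum_const, Finset.card_univ,
              Fintype.card_fin, nsmul_eq_mul, ← Finset.mul_sum, hBsum]
    calc (2/n) * I1 = (1/n) * (2 * I1) := by ring
      _ ≤ (1/n) * ((n:ℝ) * (c⁻¹ * ((γ * τ / n)^2 * ‖G x‖^2)) + c * Bsum) :=
          mul_le_mul_of_nonneg_left hsum2 (by positivity)
      _ = γ * τ / (n * β) * ‖G x‖ ^ 2 + γ * τ * β / n * ((n:ℝ)⁻¹ * Bsum) := by
          rw [hc]
          field_simp
  -- bound I2
  have hbI2 : -((2/n) * I2) ≤ 6 * M / τ * A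
      + τ^2 / (6 * (n:ℝ)^2) * ((n:ℝ)⁻¹ * Bsum) := by
    set c : ℝ := 6 * M * n / τ with hc
    have hcpos : 0 < c := by positivity
    have hpt : ∀ S : Finset (Fin n), -(2 * ⟪xnext S - x, ∑ i ∈ S, (x - φ i)⟫_ℝ)
        ≤ c * ‖xnext S - x‖^2 + c⁻¹ * ((S.card : ℝ) * ∑ i ∈ S, ‖x - φ i‖^2) := by
      intro S
      have hyoung := young13 c⁻¹ (inv_pos.mpr hcpos) (xnext S - x) (-(∑ i ∈ S, (x - φ i)))
      rw [inv_inv, inner_neg_right, norm_neg] at hyoung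
      have hCS : ‖∑ i ∈ S, (x - φ i)‖^2 ≤ (S.card : ℝ) * ∑ i ∈ S, ‖x - φ i‖^2 := by
        calc ‖∑ i ∈ S, (x - φ i)‖^2 ≤ (∑ i ∈ S, ‖x - φ i‖)^2 :=
              pow_le_pow_left₀ (norm_nonneg _) (norm_sum_le _ _) 2
          _ ≤ (S.card : ℝ) * ∑ i ∈ S, ‖x - φ i‖^2 := by
              exact sq_sum_le_card_mul_sum_sq
      have h5 : c⁻¹ * ‖∑ i ∈ S, (x - φ i)‖^2
          ≤ c⁻¹ * ((S.card : ℝ) * ∑ i ∈ S, ‖x - φ i‖^2) :=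
        mul_le_mul_of_nonneg_left hCS (inv_pos.mpr hcpos).le
      linarith [hyoung]
    have hstep : ∑ S : Finset (Fin n), P S * (-(2 * ⟪xnext S - x, ∑ i ∈ S, (x - φ i)⟫_ℝ))
        ≤ c * A + c⁻¹ * (M * (τ/n) * Bsum) := by
      calc ∑ S : Finset (Fin n), P S * (-(2 * ⟪xnext S - x, ∑ i ∈ S, (x - φ i)⟫_ℝ))
          ≤ ∑ S : Finset (Fin n), P S * (c * ‖xnext S - x‖^2
              + c⁻¹ * ((S.card : ℝ) * ∑ i ∈ S, ‖x - φ i‖^2)) :=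
            Finset.sum_le_sum fun S _ => mul_le_mul_of_nonneg_left (hpt S) (hP S)
        _ = c * A + c⁻¹ * ∑ S : Finset (Fin n),
              (P S * (S.card : ℝ)) * ∑ i ∈ S, ‖x - φ i‖^2 := by
            rw [show (∑ S : Finset (Fin n), P S * (c * ‖xnext S - x‖^2
                + c⁻¹ * ((S.card : ℝ) * ∑ i ∈ S, ‖x - φ i‖^2)))
                = ∑ S : Finset (Fin n), (c * (P S * ‖xnext S - x‖^2)
                  + c⁻¹ * ((P S * (S.card : ℝ)) * ∑ i ∈ S, ‖x - φ i‖^2)) from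
              Finset.sum_congr rfl fun S _ => by ring]
            rw [Finset.sum_add_distrib, ← Finset.mul_sum, ← Finset.mul_sum, hA]
        _ ≤ c * A + c⁻¹ * (M * (τ/n) * Bsum) := by
            have h1 : ∑ S : Finset (Fin n), (P S * (S.card : ℝ)) * ∑ i ∈ S, ‖x - φ i‖^2
                ≤ M * (τ/n) * Bsum := by
              rw [swapR13 (fun S => P S * (S.card : ℝ)) (fun i => ‖x - φ i‖^2)]
              calc ∑ i, (∑ S ∈ Finset.univ.filter (fun S : Finset (Fin n) => i ∈ S),
                    P S * (S.card : ℝ)) * ‖x - φ i‖^2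
                  ≤ ∑ i : Fin n, (M * (τ/n)) * ‖x - φ i‖^2 :=
                    Finset.sum_le_sum fun i _ =>
                      mul_le_mul_of_nonneg_right (hMil i) (by positivity)
                _ = M * (τ/n) * Bsum := by rw [← Finset.mul_sum, hBsum]
            have := mul_le_mul_of_nonneg_left h1 (le_of_lt (inv_pos.mpr hcpos))
            linarith
    have e2 : ∑ S : Finset (Fin n), P S * (-(2 * ⟪xnext S - x, ∑ i ∈ S, (x - φ i)⟫_ℝ))
        = -(2 * I2) := by
      rw [hI2d, Finset.mul_sum, ← Finset.sum_neg_distrib]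
      exact sum_congr rfl fun S _ => by ring
    have e3 : c * A + c⁻¹ * (M * (τ/n) * Bsum)
        = (6 * M / τ * A + τ^2 / (6 * (n:ℝ)^2) * ((n:ℝ)⁻¹ * Bsum)) * n := by
      rw [hc]
      field_simp
    have h4 : -(2 * I2) ≤ (6 * M / τ * A + τ^2 / (6 * (n:ℝ)^2) * ((n:ℝ)⁻¹ * Bsum)) * n := by
      rw [← e3, ← e2]; exact hstep
    calc -((2/n) * I2) = (1/n) * (-(2 * I2)) := by ring
      _ ≤ (1/n) * ((6 * M / τ * A + τ^2 / (6 * (n:ℝ)^2) * ((n:ℝ)⁻¹ * Bsum)) * n) :=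
          mul_le_mul_of_nonneg_left h4 (by positivity)
      _ = 6 * M / τ * A + τ^2 / (6 * (n:ℝ)^2) * ((n:ℝ)⁻¹ * Bsum) := by
          field_simp
  -- I3 exactly
  have hbI3 : (1/n) * I3 = (1 - τ/n) * ((n:ℝ)⁻¹ * Bsum) := by
    have e1 : I3 = Bsum - (τ/n) * Bsum := by
      rw [hI3d]
      have : ∑ S : Finset (Fin n), P S * (Bsum - ∑ i ∈ S, ‖x - φ i‖^2)
          = Bsum * ∑ S : Finset (Fin n), P S
            - ∑ S : Finset (Fin n), P S * ∑ i ∈ S, ‖x - φ i‖^2 := by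
        rw [Finset.mul_sum, ← Finset.sum_sub_distrib]
        exact sum_congr rfl fun S _ => by ring
      rw [this, hPsum, swapR13 P (fun i => ‖x - φ i‖^2)]
      have : ∑ i, (∑ S ∈ Finset.univ.filter (fun S : Finset (Fin n) => i ∈ S), P S)
          * ‖x - φ i‖^2 = (τ/n) * Bsum := by
        rw [Finset.sum_congr rfl fun i _ => by rw [hp i], ← Finset.mul_sum, hBsum]
      rw [this]
      ring
    rw [e1]
    field_simp
  -- conclude
  rw [hId]
  have hexp : (6 * M / τ + 1) * A + γ * τ / (n * β) * ‖G x‖ ^ 2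
      + (1 - τ / n + τ ^ 2 / (6 * (n : ℝ) ^ 2) + γ * τ * β / n) * ((n : ℝ)⁻¹ * Bsum)
      = A + (γ * τ / (n * β) * ‖G x‖ ^ 2 + γ * τ * β / n * ((n:ℝ)⁻¹ * Bsum))
        + (6 * M / τ * A + τ^2 / (6 * (n:ℝ)^2) * ((n:ℝ)⁻¹ * Bsum))
        + (1 - τ/n) * ((n:ℝ)⁻¹ * Bsum) := by ring
  rw [hexp]
  linarith [hbI1, hbI2, hbI3]
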